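/- With notation as in the definition of Ŝ, one has Ŝ_{r₁,s₁,r₂,s₂}(x₁,y₁,x₂,y₂; D₁,D₂) = 0 unless x₁y₁ ≡ r₁s₁D₂ (mod D₁) and x₂y₂ ≡ r₂s₂D₁ (mod D₂). -/

import Mathlib

open scoped BigOperators

/-- e(x) = exp(2πix). -/
noncomputable def e (x : ℝ) : ℂ := Complex.exp (2 * Real.pi * Complex.I * x)

/-- A choice of a pair `(Y, Z)` with `Y·b + Z·c ≡ 1 (mod D)`, when one exists. -/
noncomputable def YZ (D : ℕ) (b c : ℤ) : ℤ × ℤ :=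
  letI := Classical.propDecidable (∃ p : ℤ × ℤ, p.1 * b + p.2 * c ≡ 1 [ZMOD (D : ℤ)])
  if h : ∃ p : ℤ × ℤ, p.1 * b + p.2 * c ≡ 1 [ZMOD (D : ℤ)] then h.choose else (0, 0)

/-- The long Weyl element GL(3) Kloosterman sum
`S(n₁,m₂,m₁,n₂;D₁,D₂) = ∑ e((n₁B₁ + m₁(Y₁D₂ − Z₁B₂))/D₁ + (m₂B₂ + n₂(Y₂D₁ − Z₂B₁))/D₂)`,
where the sum runs over `B₁,C₁ mod D₁` and `B₂,C₂ mod D₂` with `gcd(B_j,C_j,D_j)=1` and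
`D₁C₂ + B₁B₂ + D₂C₁ ≡ 0 mod D₁D₂`, and `Y_jB_j + Z_jC_j ≡ 1 mod D_j`. -/
noncomputable def SKl (n₁ m₂ m₁ n₂ : ℤ) (D₁ D₂ : ℕ) : ℂ :=
  ∑ b₁ ∈ Finset.range D₁, ∑ c₁ ∈ Finset.range D₁,
    ∑ b₂ ∈ Finset.range D₂, ∑ c₂ ∈ Finset.range D₂,
      if Nat.gcd (Nat.gcd b₁ c₁) D₁ = 1 ∧ Nat.gcd (Nat.gcd b₂ c₂) D₂ = 1 ∧
          (D₁ : ℤ) * c₂ + (b₁ : ℤ) * b₂ + (D₂ : ℤ) * c₁ ≡ 0 [ZMOD ((D₁ : ℤ) * D₂)] then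
        e ((((n₁ * b₁ + m₁ * ((YZ D₁ (b₁ : ℤ) (c₁ : ℤ)).1 * D₂
                - (YZ D₁ (b₁ : ℤ) (c₁ : ℤ)).2 * b₂) : ℤ)) : ℝ) / (D₁ : ℝ)
          + (((m₂ * b₂ + n₂ * ((YZ D₂ (b₂ : ℤ) (c₂ : ℤ)).1 * D₁
                - (YZ D₂ (b₂ : ℤ) (c₂ : ℤ)).2 * b₁) : ℤ)) : ℝ) / (D₂ : ℝ))
      else 0

/-- The normalized Fourier transform of the long Weyl element Kloosterman sum:
`Ŝ_{r₁,s₁,r₂,s₂}(x₁,y₁,x₂,y₂;D₁,D₂) = (1/(D₁²D₂²)) ∑_{n₁,m₁ mod D₁} ∑_{n₂,m₂ mod D₂}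
  S(n₁r₁, m₂r₂, m₁s₁, n₂s₂; D₁,D₂) e(−(x₁m₁+y₁n₁)/D₁ − (x₂m₂+y₂n₂)/D₂)`. -/
noncomputable def Shat (r₁ s₁ r₂ s₂ x₁ y₁ x₂ y₂ : ℤ) (D₁ D₂ : ℕ) : ℂ :=
  (1 / ((D₁ : ℂ) ^ 2 * (D₂ : ℂ) ^ 2)) *
    ∑ n₁ ∈ Finset.range D₁, ∑ m₁ ∈ Finset.range D₁,
      ∑ n₂ ∈ Finset.range D₂, ∑ m₂ ∈ Finset.range D₂,
        SKl ((n₁ : ℤ) * r₁) ((m₂ : ℤ) * r₂) ((m₁ : ℤ) * s₁) ((n₂ : ℤ) * s₂) D₁ D₂ *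
          e (-(((x₁ * (m₁ : ℤ) + y₁ * (n₁ : ℤ) : ℤ) : ℝ) / (D₁ : ℝ))
            - ((x₂ * (m₂ : ℤ) + y₂ * (n₂ : ℤ) : ℤ) : ℝ) / (D₂ : ℝ))

lemma e_add (x y : ℝ) : e (x + y) = e x * e y := by
  simp [e, mul_add, Complex.exp_add]

lemma e_int (n : ℤ) : e n = 1 := by
  rw [e, mul_comm]
  exact_mod_cast Complex.exp_int_mul_two_pi_mul_I n

lemma e_eq_one_iff {x : ℝ} : e x = 1 ↔ ∃ n : ℤ, x = n := by
  rw [e, Complex.exp_eq_one_iff]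
  constructor
  · rintro ⟨n, hn⟩
    refine ⟨n, ?_⟩
    have h2 : (2 * Real.pi * Complex.I : ℂ) ≠ 0 := by
      simp [Real.pi_ne_zero, Complex.I_ne_zero]
    have key : (x : ℂ) * (2*Real.pi*Complex.I) = (n:ℂ) * (2*Real.pi*Complex.I) := by
      linear_combination hn
    have := mul_right_cancel₀ h2 key
    exact_mod_cast this
  · rintro ⟨n, rfl⟩
    exact ⟨n, by push_cast; ring⟩

lemma sum_e_div (D : ℕ) (hD : 0 < D) (a : ℤ) :
    ∑ n ∈ Finset.range D, e (((n : ℤ) * a : ℤ) / (D : ℝ)) = if (D : ℤ) ∣ a then (D : ℂ) else 0 := by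
  have hDR : (D : ℝ) ≠ 0 := Nat.cast_ne_zero.mpr hD.ne'
  by_cases h : (D : ℤ) ∣ a
  · rw [if_pos h]
    obtain ⟨k, rfl⟩ := h
    have : ∀ n ∈ Finset.range D, e (((n : ℤ) * ((D:ℤ) * k) : ℤ) / (D : ℝ)) = 1 := by
      intro n _
      have : (((n : ℤ) * ((D:ℤ) * k) : ℤ) : ℝ) / (D : ℝ) = ((n * k : ℤ) : ℝ) := by
        push_cast; field_simp
      rw [this, e_int]
    rw [Finset.sum_congr rfl this]
    simp
  · rw [if_neg h]
    have hz : ∀ n ∈ Finset.range D, e (((n:ℤ) * a : ℤ) / (D:ℝ)) = (e ((a:ℝ)/D))^n := by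
      intro n _
      rw [e, e, ← Complex.exp_nat_mul]
      congr 1
      push_cast; ring
    rw [Finset.sum_congr rfl hz, geom_sum_eq, sub_eq_zero.mpr, zero_div]
    · have : e ((a:ℝ)/D) ^ D = e ((a:ℝ)/D * D) := by
        rw [e, e, ← Complex.exp_nat_mul]; congr 1; push_cast; ring
      rw [this, show (a:ℝ)/D * D = ((a:ℤ):ℝ) by field_simp]
      exact e_int a
    · intro hone
      rw [e_eq_one_iff] at hone
      obtain ⟨n, hn⟩ := hone
      apply h
      refine ⟨n, ?_⟩
      have : (a : ℝ) = (D:ℝ) * n := by field_simp at hn; linarith [hn]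
      exact_mod_cast this

lemma sum_e_ne_zero_dvd {D : ℕ} (hD : 0 < D) {a : ℤ}
    (h : ∑ n ∈ Finset.range D, e (((n : ℤ) * a : ℤ) / (D : ℝ)) ≠ 0) : (D : ℤ) ∣ a := by
  by_contra hd
  rw [sum_e_div D hD a, if_neg hd] at h
  exact h rfl

lemma YZ_spec (D : ℕ) (b c : ℕ) (h : Nat.gcd (Nat.gcd b c) D = 1) :
    (YZ D b c).1 * b + (YZ D b c).2 * c ≡ 1 [ZMOD (D : ℤ)] := by
  have hex : ∃ p : ℤ × ℤ, p.1 * b + p.2 * c ≡ 1 [ZMOD (D : ℤ)] := by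
    set g : ℕ := Nat.gcd b c with hg
    have h1 : (g : ℤ) = b * Nat.gcdA b c + c * Nat.gcdB b c := Nat.gcd_eq_gcd_ab b c
    have h2 : (1 : ℤ) = g * Nat.gcdA g D + D * Nat.gcdB g D := by
      have := Nat.gcd_eq_gcd_ab g D
      rw [h] at this; exact_mod_cast this
    refine ⟨(Nat.gcdA b c * Nat.gcdA g D, Nat.gcdB b c * Nat.gcdA g D), ?_⟩
    have : (Nat.gcdA b c * Nat.gcdA g D) * b + (Nat.gcdB b c * Nat.gcdA g D) * c - 1
        = (D : ℤ) * (-(Nat.gcdB g D)) := by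
      linear_combination (-(Nat.gcdA g D)) * h1 - h2
    have hdvd : (D : ℤ) ∣ ((Nat.gcdA b c * Nat.gcdA g D) * b + (Nat.gcdB b c * Nat.gcdA g D) * c - 1) :=
      ⟨-(Nat.gcdB g D), this⟩
    exact Int.ModEq.symm ((Int.modEq_iff_dvd).mpr (by simpa using hdvd))
  rw [YZ, dif_pos hex]
  exact hex.choose_spec

section Swap
variable {M : Type*} [AddCommMonoid M]

lemma pull2 (s t u : Finset ℕ) (f : ℕ → ℕ → ℕ → M) :
    (∑ a ∈ s, ∑ b ∈ t, ∑ p ∈ u, f a b p) = ∑ p ∈ u, ∑ a ∈ s, ∑ b ∈ t, f a b p := by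
  rw [Finset.sum_congr rfl fun a _ => Finset.sum_comm (f := fun b p => f a b p)]
  exact Finset.sum_comm

lemma pull3 (s t u v : Finset ℕ) (f : ℕ → ℕ → ℕ → ℕ → M) :
    (∑ a ∈ s, ∑ b ∈ t, ∑ c ∈ u, ∑ p ∈ v, f a b c p)
      = ∑ p ∈ v, ∑ a ∈ s, ∑ b ∈ t, ∑ c ∈ u, f a b c p := by
  rw [Finset.sum_congr rfl fun a _ => pull2 t u v (fun b c p => f a b c p)]
  exact Finset.sum_comm

lemma pull4 (s t u v w : Finset ℕ) (f : ℕ → ℕ → ℕ → ℕ → ℕ → M) :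
    (∑ a ∈ s, ∑ b ∈ t, ∑ c ∈ u, ∑ d ∈ v, ∑ p ∈ w, f a b c d p)
      = ∑ p ∈ w, ∑ a ∈ s, ∑ b ∈ t, ∑ c ∈ u, ∑ d ∈ v, f a b c d p := by
  rw [Finset.sum_congr rfl fun a _ => pull3 t u v w (fun b c d p => f a b c d p)]
  exact Finset.sum_comm

lemma swap8 (s1 s2 s3 s4 t1 t2 t3 t4 : Finset ℕ)
    (f : ℕ → ℕ → ℕ → ℕ → ℕ → ℕ → ℕ → ℕ → M) :
    (∑ a ∈ s1, ∑ b ∈ s2, ∑ c ∈ s3, ∑ d ∈ s4,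
      ∑ p ∈ t1, ∑ q ∈ t2, ∑ r ∈ t3, ∑ o ∈ t4, f a b c d p q r o)
    = ∑ p ∈ t1, ∑ q ∈ t2, ∑ r ∈ t3, ∑ o ∈ t4,
        ∑ a ∈ s1, ∑ b ∈ s2, ∑ c ∈ s3, ∑ d ∈ s4, f a b c d p q r o := by
  rw [pull4 s1 s2 s3 s4 t1 (fun a b c d p => ∑ q ∈ t2, ∑ r ∈ t3, ∑ o ∈ t4, f a b c d p q r o)]
  refine Finset.sum_congr rfl fun p _ => ?_
  rw [pull4 s1 s2 s3 s4 t2 (fun a b c d q => ∑ r ∈ t3, ∑ o ∈ t4, f a b c d p q r o)]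
  refine Finset.sum_congr rfl fun q _ => ?_
  rw [pull4 s1 s2 s3 s4 t3 (fun a b c d r => ∑ o ∈ t4, f a b c d p q r o)]
  refine Finset.sum_congr rfl fun r _ => ?_
  exact pull4 s1 s2 s3 s4 t4 (fun a b c d o => f a b c d p q r o)

end Swap

lemma sum4_factor (s t u v : Finset ℕ) (f g h k : ℕ → ℂ) :
    (∑ a ∈ s, ∑ b ∈ t, ∑ c ∈ u, ∑ d ∈ v, f a * g b * h c * k d)
      = (∑ a ∈ s, f a) * (∑ b ∈ t, g b) * (∑ c ∈ u, h c) * (∑ d ∈ v, k d) := by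
  simp only [← Finset.sum_mul, ← Finset.mul_sum]

theorem shat_vanishing_congruence (r₁ s₁ r₂ s₂ : ℤ)
    (hr₁ : r₁ ≠ 0) (hs₁ : s₁ ≠ 0) (hr₂ : r₂ ≠ 0) (hs₂ : s₂ ≠ 0)
    (x₁ y₁ x₂ y₂ : ℤ) (D₁ D₂ : ℕ) (hD₁ : 0 < D₁) (hD₂ : 0 < D₂)
    (hne : Shat r₁ s₁ r₂ s₂ x₁ y₁ x₂ y₂ D₁ D₂ ≠ 0) :
    x₁ * y₁ ≡ r₁ * s₁ * (D₂ : ℤ) [ZMOD (D₁ : ℤ)] ∧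
      x₂ * y₂ ≡ r₂ * s₂ * (D₁ : ℤ) [ZMOD (D₂ : ℤ)] := by
  have hD₁R : (D₁ : ℝ) ≠ 0 := Nat.cast_ne_zero.mpr hD₁.ne'
  have hD₂R : (D₂ : ℝ) ≠ 0 := Nat.cast_ne_zero.mpr hD₂.ne'
  -- Step 1: rewrite Shat with the b,c sums outside.
  have key : Shat r₁ s₁ r₂ s₂ x₁ y₁ x₂ y₂ D₁ D₂ =
      (1 / ((D₁ : ℂ) ^ 2 * (D₂ : ℂ) ^ 2)) *
      ∑ b₁ ∈ Finset.range D₁, ∑ c₁ ∈ Finset.range D₁,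
        ∑ b₂ ∈ Finset.range D₂, ∑ c₂ ∈ Finset.range D₂,
          if Nat.gcd (Nat.gcd b₁ c₁) D₁ = 1 ∧ Nat.gcd (Nat.gcd b₂ c₂) D₂ = 1 ∧
              (D₁ : ℤ) * c₂ + (b₁ : ℤ) * b₂ + (D₂ : ℤ) * c₁ ≡ 0 [ZMOD ((D₁ : ℤ) * D₂)] then
            (∑ n₁ ∈ Finset.range D₁, e ((((n₁ : ℤ) * (r₁ * b₁ - y₁) : ℤ) : ℝ) / (D₁ : ℝ)))
            * (∑ m₁ ∈ Finset.range D₁, e ((((m₁ : ℤ) *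
                (s₁ * ((YZ D₁ (b₁ : ℤ) (c₁ : ℤ)).1 * D₂
                  - (YZ D₁ (b₁ : ℤ) (c₁ : ℤ)).2 * b₂) - x₁) : ℤ) : ℝ) / (D₁ : ℝ)))
            * (∑ n₂ ∈ Finset.range D₂, e ((((n₂ : ℤ) *
                (s₂ * ((YZ D₂ (b₂ : ℤ) (c₂ : ℤ)).1 * D₁
                  - (YZ D₂ (b₂ : ℤ) (c₂ : ℤ)).2 * b₁) - y₂) : ℤ) : ℝ) / (D₂ : ℝ)))
            * (∑ m₂ ∈ Finset.range D₂, e ((((m₂ : ℤ) * (r₂ * b₂ - x₂) : ℤ) : ℝ) / (D₂ : ℝ)))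
          else 0 := by
    rw [Shat]
    congr 1
    conv_lhs => simp only [SKl, Finset.sum_mul, ite_mul, zero_mul]
    refine (swap8 _ _ _ _ _ _ _ _ _).trans ?_
    refine Finset.sum_congr rfl fun b₁ _ => Finset.sum_congr rfl fun c₁ _ =>
      Finset.sum_congr rfl fun b₂ _ => Finset.sum_congr rfl fun c₂ _ => ?_
    by_cases hcond : Nat.gcd (Nat.gcd b₁ c₁) D₁ = 1 ∧ Nat.gcd (Nat.gcd b₂ c₂) D₂ = 1 ∧
        (D₁ : ℤ) * c₂ + (b₁ : ℤ) * b₂ + (D₂ : ℤ) * c₁ ≡ 0 [ZMOD ((D₁ : ℤ) * D₂)]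
    · simp only [if_pos hcond]
      rw [← sum4_factor]
      refine Finset.sum_congr rfl fun n₁ _ => Finset.sum_congr rfl fun m₁ _ =>
        Finset.sum_congr rfl fun n₂ _ => Finset.sum_congr rfl fun m₂ _ => ?_
      rw [← e_add, ← e_add, ← e_add, ← e_add]
      congr 1
      push_cast
      field_simp
      ring
    · simp only [if_neg hcond, Finset.sum_const_zero]
  -- Step 2: extract a nonzero term.
  rw [key] at hne
  have hc : (1 / ((D₁ : ℂ) ^ 2 * (D₂ : ℂ) ^ 2)) ≠ 0 := by
    simp [hD₁.ne', hD₂.ne']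
  have hsum := right_ne_zero_of_mul hne
  obtain ⟨b₁, hb₁, hsum⟩ := Finset.exists_ne_zero_of_sum_ne_zero hsum
  obtain ⟨c₁, hc₁, hsum⟩ := Finset.exists_ne_zero_of_sum_ne_zero hsum
  obtain ⟨b₂, hb₂, hsum⟩ := Finset.exists_ne_zero_of_sum_ne_zero hsum
  obtain ⟨c₂, hc₂, hterm⟩ := Finset.exists_ne_zero_of_sum_ne_zero hsum
  by_cases hcond : Nat.gcd (Nat.gcd b₁ c₁) D₁ = 1 ∧ Nat.gcd (Nat.gcd b₂ c₂) D₂ = 1 ∧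
      (D₁ : ℤ) * c₂ + (b₁ : ℤ) * b₂ + (D₂ : ℤ) * c₁ ≡ 0 [ZMOD ((D₁ : ℤ) * D₂)]
  swap
  · rw [if_neg hcond] at hterm; exact absurd rfl hterm
  rw [if_pos hcond] at hterm
  obtain ⟨hg₁, hg₂, hbig⟩ := hcond
  set Y₁ := (YZ D₁ (b₁ : ℤ) (c₁ : ℤ)).1 with hY₁
  set Z₁ := (YZ D₁ (b₁ : ℤ) (c₁ : ℤ)).2 with hZ₁
  set Y₂ := (YZ D₂ (b₂ : ℤ) (c₂ : ℤ)).1 with hY₂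
  set Z₂ := (YZ D₂ (b₂ : ℤ) (c₂ : ℤ)).2 with hZ₂
  have h1 : (D₁ : ℤ) ∣ (r₁ * b₁ - y₁) :=
    sum_e_ne_zero_dvd hD₁ (left_ne_zero_of_mul (left_ne_zero_of_mul (left_ne_zero_of_mul hterm)))
  have h2 : (D₁ : ℤ) ∣ (s₁ * (Y₁ * D₂ - Z₁ * b₂) - x₁) :=
    sum_e_ne_zero_dvd hD₁ (right_ne_zero_of_mul (left_ne_zero_of_mul (left_ne_zero_of_mul hterm)))
  have h3 : (D₂ : ℤ) ∣ (s₂ * (Y₂ * D₁ - Z₂ * b₁) - y₂) :=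
    sum_e_ne_zero_dvd hD₂ (right_ne_zero_of_mul (left_ne_zero_of_mul hterm))
  have h4 : (D₂ : ℤ) ∣ (r₂ * b₂ - x₂) :=
    sum_e_ne_zero_dvd hD₂ (right_ne_zero_of_mul hterm)
  have hYZ₁ := YZ_spec D₁ b₁ c₁ hg₁
  have hYZ₂ := YZ_spec D₂ b₂ c₂ hg₂
  -- Step 3: number theory in ZMod.
  constructor
  · rw [← ZMod.intCast_eq_intCast_iff]
    have e1 : (Y₁ : ZMod D₁) * (b₁ : ℕ) + (Z₁ : ZMod D₁) * (c₁ : ℕ) = 1 := by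
      have := (ZMod.intCast_eq_intCast_iff _ _ _).mpr hYZ₁
      push_cast at this ⊢
      linear_combination this
    have e2 : ((b₁ : ZMod D₁)) * (b₂ : ℕ) = -((D₂ : ZMod D₁)) * (c₁ : ℕ) := by
      have hb : ((D₁ : ℤ) * c₂ + (b₁ : ℤ) * b₂ + (D₂ : ℤ) * c₁ : ℤ) ≡ 0 [ZMOD (D₁ : ℤ)] :=
        hbig.of_dvd (dvd_mul_right _ _)
      have := (ZMod.intCast_eq_intCast_iff _ _ _).mpr hb
      push_cast at this
      rw [ZMod.natCast_self] at this
      linear_combination this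
    have hx : ((x₁ : ZMod D₁)) = (s₁ : ZMod D₁) * ((Y₁ : ZMod D₁) * (D₂ : ℕ) - (Z₁ : ZMod D₁) * (b₂ : ℕ)) := by
      have := (ZMod.intCast_zmod_eq_zero_iff_dvd _ _).mpr h2
      push_cast at this
      linear_combination -this
    have hy : ((y₁ : ZMod D₁)) = (r₁ : ZMod D₁) * (b₁ : ℕ) := by
      have := (ZMod.intCast_zmod_eq_zero_iff_dvd _ _).mpr h1
      push_cast at this
      linear_combination -this
    push_cast
    rw [hx, hy]
    linear_combination ((r₁ : ZMod D₁) * s₁ * (D₂ : ℕ)) * e1 - ((r₁ : ZMod D₁) * s₁ * Z₁) * e2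
  · rw [← ZMod.intCast_eq_intCast_iff]
    have e1 : (Y₂ : ZMod D₂) * (b₂ : ℕ) + (Z₂ : ZMod D₂) * (c₂ : ℕ) = 1 := by
      have := (ZMod.intCast_eq_intCast_iff _ _ _).mpr hYZ₂
      push_cast at this ⊢
      linear_combination this
    have e2 : ((b₁ : ZMod D₂)) * (b₂ : ℕ) = -((D₁ : ZMod D₂)) * (c₂ : ℕ) := by
      have hb : ((D₁ : ℤ) * c₂ + (b₁ : ℤ) * b₂ + (D₂ : ℤ) * c₁ : ℤ) ≡ 0 [ZMOD (D₂ : ℤ)] :=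
        hbig.of_dvd (dvd_mul_left _ _)
      have := (ZMod.intCast_eq_intCast_iff _ _ _).mpr hb
      push_cast at this
      rw [ZMod.natCast_self] at this
      linear_combination this
    have hy : ((y₂ : ZMod D₂)) = (s₂ : ZMod D₂) * ((Y₂ : ZMod D₂) * (D₁ : ℕ) - (Z₂ : ZMod D₂) * (b₁ : ℕ)) := by
      have := (ZMod.intCast_zmod_eq_zero_iff_dvd _ _).mpr h3
      push_cast at this
      linear_combination -this
    have hx : ((x₂ : ZMod D₂)) = (r₂ : ZMod D₂) * (b₂ : ℕ) := by
      have := (ZMod.intCast_zmod_eq_zero_iff_dvd _ _).mpr h4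
      push_cast at this
      linear_combination -this
    push_cast
    rw [hx, hy]
    linear_combination ((r₂ : ZMod D₂) * s₂ * (D₁ : ℕ)) * e1 - ((r₂ : ZMod D₂) * s₂ * Z₂) * e2
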